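/- Let d ≥ 2 and let L ⊂ ℝ^d be an integration lattice whose lattice point set 𝒫(L) = L ∩ [0,1)^d has n elements. Then the spectral test satisfies σ(L) ≥ (√π/2)·(Γ(d/2 + 1))^{−1/d}·n^{−1/d}. -/

import Mathlib

open MeasureTheory Real
open scoped ENNReal NNReal
open scoped Pointwise Matrix

noncomputable section

/-- A `d`-dimensional lattice: the set of integer combinations of some basis of `ℝ^d`. -/
def IsLattice (d : ℕ) (L : Set (EuclideanSpace ℝ (Fin d))) : Prop :=
  ∃ b : Module.Basis (Fin d) ℝ (EuclideanSpace ℝ (Fin d)),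
    L = {v | ∃ k : Fin d → ℤ, v = ∑ i, (k i : ℝ) • b i}

/-- An integration lattice: a lattice which contains `ℤ^d`. -/
def IsIntegrationLattice (d : ℕ) (L : Set (EuclideanSpace ℝ (Fin d))) : Prop :=
  IsLattice d L ∧ ∀ v : EuclideanSpace ℝ (Fin d), (∀ i, ∃ z : ℤ, v i = z) → v ∈ L

/-- The half-open unit cube `[0,1)^d`. -/
def unitBox (d : ℕ) : Set (EuclideanSpace ℝ (Fin d)) :=
  {x | ∀ i, 0 ≤ x i ∧ x i < 1}

/-- The dual lattice `L^⊥ = {h : ⟪h,x⟫ ∈ ℤ for all x ∈ L}`. -/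
def dualLattice (d : ℕ) (L : Set (EuclideanSpace ℝ (Fin d))) :
    Set (EuclideanSpace ℝ (Fin d)) :=
  {h | ∀ v ∈ L, ∃ z : ℤ, (inner ℝ h v : ℝ) = z}

/-- The spectral test `σ(L) = 1 / min{‖h‖ : h ∈ L^⊥, h ≠ 0}`. -/
def spectralTest (d : ℕ) (L : Set (EuclideanSpace ℝ (Fin d))) : ℝ :=
  (sInf {r : ℝ | ∃ h ∈ dualLattice d L, h ≠ 0 ∧ r = ‖h‖})⁻¹

/-- The isotropic discrepancy of an `n`-point set `P ⊆ [0,1)^d`: the supremum over all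
convex subsets `K` of `[0,1)^d` of `|#(K ∩ P)/n − vol(K)|`. -/
def isoDisc (d : ℕ) (P : Set (EuclideanSpace ℝ (Fin d))) (n : ℕ) : ℝ :=
  sSup {r : ℝ | ∃ K : Set (EuclideanSpace ℝ (Fin d)), Convex ℝ K ∧ K ⊆ unitBox d ∧
    r = |(Nat.card ↥(K ∩ P) : ℝ) / n - (volume K).toReal|}

variable {d : ℕ}

abbrev stdB (d : ℕ) : Module.Basis (Fin d) ℝ (EuclideanSpace ℝ (Fin d)) :=
  (EuclideanSpace.basisFun (Fin d) ℝ).toBasis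

lemma unitBox_eq : unitBox d = ZSpan.fundamentalDomain (stdB d) := by
  ext x
  simp [unitBox, ZSpan.fundamentalDomain, Set.mem_Ico, EuclideanSpace.basisFun_repr,
    OrthonormalBasis.coe_toBasis_repr_apply]

lemma volume_unitBox : volume (unitBox d) = 1 := by
  have h := (EuclideanSpace.volume_preserving_symm_measurableEquiv_toLp (Fin d)).symm
  have : unitBox d = (MeasurableEquiv.toLp 2 (Fin d → ℝ)).symm ⁻¹'
      (Set.univ.pi fun _ : Fin d => Set.Ico (0:ℝ) 1) := by
    ext x; simp [unitBox, Set.mem_Ico]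
  rw [this, (EuclideanSpace.volume_preserving_symm_measurableEquiv_toLp (Fin d)).measure_preimage
    (MeasurableSet.univ_pi fun _ => measurableSet_Ico).nullMeasurableSet]
  rw [volume_pi_pi]
  simp [Real.volume_Ico]

lemma mem_zspan_iff (b : Module.Basis (Fin d) ℝ (EuclideanSpace ℝ (Fin d)))
    (v : EuclideanSpace ℝ (Fin d)) :
    v ∈ Submodule.span ℤ (Set.range b) ↔ ∃ k : Fin d → ℤ, v = ∑ i, (k i : ℝ) • b i := by
  rw [Finsupp.mem_span_range_iff_exists_finsupp]
  constructor
  · rintro ⟨c, hc⟩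
    exact ⟨c, by rw [← hc, Finsupp.sum_fintype] <;>
      simp [Int.cast_smul_eq_zsmul]⟩
  · rintro ⟨k, rfl⟩
    refine ⟨Finsupp.equivFunOnFinite.symm k, ?_⟩
    rw [Finsupp.sum_fintype] <;> simp [Int.cast_smul_eq_zsmul]

lemma mem_stdspan_iff (v : EuclideanSpace ℝ (Fin d)) :
    v ∈ Submodule.span ℤ (Set.range (stdB d)) ↔ ∀ i, ∃ z : ℤ, v i = z := by
  rw [Module.Basis.mem_span_iff_repr_mem]
  refine forall_congr' fun i => ?_
  simp only [OrthonormalBasis.coe_toBasis_repr_apply, EuclideanSpace.basisFun_repr,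
    Set.mem_range, algebraMap_int_eq, eq_intCast]
  exact ⟨fun ⟨z, h⟩ => ⟨z, h.symm⟩, fun ⟨z, h⟩ => ⟨z, h.symm⟩⟩

lemma countable_span (b : Module.Basis (Fin d) ℝ (EuclideanSpace ℝ (Fin d))) :
    Countable ↥(Submodule.span ℤ (Set.range b)) := by
  have hsurj : Function.Surjective
      (fun k : Fin d → ℤ => (⟨∑ i, (k i : ℝ) • b i,
        (mem_zspan_iff b _).mpr ⟨k, rfl⟩⟩ : ↥(Submodule.span ℤ (Set.range b)))) := by
    rintro ⟨x, hx⟩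
    obtain ⟨k, hk⟩ := (mem_zspan_iff b x).mp hx
    exact ⟨k, Subtype.ext hk.symm⟩
  exact hsurj.countable

lemma covolume_counting (b : Module.Basis (Fin d) ℝ (EuclideanSpace ℝ (Fin d)))
    (hsub : Submodule.span ℤ (Set.range (stdB d)) ≤ Submodule.span ℤ (Set.range b))
    (hfin : ((Submodule.span ℤ (Set.range b) : Set (EuclideanSpace ℝ (Fin d)))
      ∩ unitBox d).Finite) :
    (Nat.card ((Submodule.span ℤ (Set.range b) : Set (EuclideanSpace ℝ (Fin d)))
      ∩ unitBox d : Set (EuclideanSpace ℝ (Fin d))) : ℝ≥0∞) *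
      volume (ZSpan.fundamentalDomain b) = 1 := by
  classical
  set Λ := Submodule.span ℤ (Set.range b) with hΛ
  set Λ₀ := Submodule.span ℤ (Set.range (stdB d)) with hΛ₀
  set F := ZSpan.fundamentalDomain b with hF
  set C : Finset (EuclideanSpace ℝ (Fin d)) := hfin.toFinset with hCdef
  have hCmem : ∀ v, v ∈ C ↔ v ∈ (Λ : Set _) ∧ v ∈ unitBox d := by
    intro v; simp [hCdef, Set.Finite.mem_toFinset]
  set F' : Set (EuclideanSpace ℝ (Fin d)) := ⋃ v ∈ C, v +ᵥ F with hF'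
  -- each point decomposes uniquely
  have hbox_int : ∀ v v' : EuclideanSpace ℝ (Fin d), v ∈ unitBox d → v' ∈ unitBox d →
      v - v' ∈ Λ₀ → v = v' := by
    intro v v' hv hv' hvv
    rw [mem_stdspan_iff] at hvv
    ext i
    obtain ⟨z, hz⟩ := hvv i
    have hz' : v i - v' i = z := by
      have : (v - v') i = v i - v' i := rfl
      rw [← this, hz]
    have h1 := (hv i).1; have h2 := (hv i).2
    have h3 := (hv' i).1; have h4 := (hv' i).2
    have hz0 : z = 0 := by
      have hlt : (z : ℝ) < 1 := by rw [← hz']; linarith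
      have hgt : (-1 : ℝ) < z := by rw [← hz']; linarith
      have : |(z : ℝ)| < 1 := abs_lt.mpr ⟨hgt, hlt⟩
      exact Int.abs_lt_one_iff.mp (by exact_mod_cast this)
    have : v i - v' i = 0 := by rw [hz', hz0]; norm_num
    linarith
  -- continue
  have hmeasF : MeasurableSet F := ZSpan.fundamentalDomain_measurableSet b
  have hmeasF' : MeasurableSet F' :=
    C.measurableSet_biUnion fun v _ => hmeasF.const_vadd v
  have hfd' : IsAddFundamentalDomain Λ₀.toAddSubgroup F' volume := by
    refine IsAddFundamentalDomain.mk' hmeasF'.nullMeasurableSet fun x => ?_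
    obtain ⟨w, hw, hwu⟩ := ZSpan.exist_unique_vadd_mem_fundamentalDomain b x
    set y : EuclideanSpace ℝ (Fin d) := (w : EuclideanSpace ℝ (Fin d)) with hy
    set v : EuclideanSpace ℝ (Fin d) := ZSpan.fract (stdB d) (-y) with hv
    have hvbox : v ∈ unitBox d := by
      rw [unitBox_eq]; exact ZSpan.fract_mem_fundamentalDomain _ _
    have hvy : v + y ∈ Λ₀ := by
      have h1 : v = -y - (ZSpan.floor (stdB d) (-y) : EuclideanSpace ℝ (Fin d)) := rfl
      have h2 : v + y = -(ZSpan.floor (stdB d) (-y) : EuclideanSpace ℝ (Fin d)) := by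
        rw [h1]; abel
      rw [h2]; exact neg_mem (ZSpan.floor (stdB d) (-y)).2
    have hvΛ : v ∈ Λ := by
      have h3 : v = (v + y) - y := by abel
      rw [h3]; exact sub_mem (hsub hvy) w.2
    have hvC : v ∈ C := (hCmem v).mpr ⟨hvΛ, hvbox⟩
    have key : ∀ g : Λ₀, (g +ᵥ x ∈ F' ↔ (g : EuclideanSpace ℝ (Fin d)) = v + y) := by
      intro g
      constructor
      · intro hgx
        rw [hF', Set.mem_iUnion₂] at hgx
        obtain ⟨v', hv'C, hgv⟩ := hgx
        obtain ⟨f, hf, hfe⟩ := hgv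
        -- hfe : v' +ᵥ f = g +ᵥ x
        have hgE : (g : EuclideanSpace ℝ (Fin d)) + x = v' + f := hfe.symm
        obtain ⟨hv'Λ, hv'box⟩ := (hCmem v').mp hv'C
        have hmem : ((g : EuclideanSpace ℝ (Fin d)) - v') ∈ Λ := sub_mem (hsub g.2) hv'Λ
        have hin : (⟨(g : EuclideanSpace ℝ (Fin d)) - v', hmem⟩ : Λ) +ᵥ x ∈ F := by
          show (g : EuclideanSpace ℝ (Fin d)) - v' + x ∈ F
          have : (g : EuclideanSpace ℝ (Fin d)) - v' + x = f := by
            rw [eq_comm, ← sub_eq_iff_eq_add'] at hgE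
            rw [← hgE]; abel
          rwa [this]
        have huniq := hwu _ hin
        have hweq : (g : EuclideanSpace ℝ (Fin d)) - v' = y := by
          rw [hy]; exact congrArg Subtype.val huniq
        have hveq : v = v' := by
          refine hbox_int v v' hvbox hv'box ?_
          have heq : v - v' = (v + y) - (g : EuclideanSpace ℝ (Fin d)) := by
            rw [sub_eq_iff_eq_add] at hweq
            rw [hweq]; abel
          rw [heq]; exact sub_mem hvy g.2
        rw [sub_eq_iff_eq_add] at hweq
        rw [hweq, hveq]; abel
      · intro hgv
        rw [hF', Set.mem_iUnion₂]
        refine ⟨v, hvC, ?_⟩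
        refine ⟨w +ᵥ x, hw, ?_⟩
        show v + ((w : EuclideanSpace ℝ (Fin d)) + x) = (g : EuclideanSpace ℝ (Fin d)) + x
        rw [hgv, ← hy]; abel
    refine ⟨⟨v + y, hvy⟩, (key _).mpr rfl, fun g hg => Subtype.ext ((key g).mp hg)⟩
  -- measures
  have hfd0 : IsAddFundamentalDomain Λ₀.toAddSubgroup (unitBox d) volume := by
    rw [unitBox_eq]; exact ZSpan.isAddFundamentalDomain' (stdB d) volume
  haveI : Countable ↥Λ₀.toAddSubgroup := countable_span (stdB d)
  have h1 : volume F' = 1 := by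
    rw [hfd'.measure_eq hfd0, volume_unitBox]
  have hdisj : (C : Set (EuclideanSpace ℝ (Fin d))).PairwiseDisjoint
      (fun v => v +ᵥ F) := by
    intro v hv v' hv' hne
    refine Set.disjoint_left.mpr fun x hx hx' => hne ?_
    obtain ⟨f, hf, hfx⟩ := hx
    obtain ⟨f', hf', hfx'⟩ := hx'
    have hvΛ : v ∈ Λ := ((hCmem v).mp (by exact_mod_cast hv)).1
    have hv'Λ : v' ∈ Λ := ((hCmem v').mp (by exact_mod_cast hv')).1
    obtain ⟨u, hu, huu⟩ := ZSpan.exist_unique_vadd_mem_fundamentalDomain b x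
    have m1 : (⟨-v, neg_mem hvΛ⟩ : Λ) +ᵥ x ∈ ZSpan.fundamentalDomain b := by
      show -v + x ∈ ZSpan.fundamentalDomain b
      have : -v + x = f := by rw [← hfx]; show -v + (v + f) = f; abel
      rwa [this]
    have m2 : (⟨-v', neg_mem hv'Λ⟩ : Λ) +ᵥ x ∈ ZSpan.fundamentalDomain b := by
      show -v' + x ∈ ZSpan.fundamentalDomain b
      have : -v' + x = f' := by rw [← hfx']; show -v' + (v' + f') = f'; abel
      rwa [this]
    have he := (huu _ m1).trans (huu _ m2).symm
    have : -v = -v' := congrArg Subtype.val he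
    exact neg_injective this
  have h2 : volume F' = C.card * volume F := by
    rw [hF', measure_biUnion_finset hdisj (fun v _ => hmeasF.const_vadd v)]
    simp only [measure_vadd]
    rw [Finset.sum_const, nsmul_eq_mul]
  have hcard : (Nat.card ((Λ : Set (EuclideanSpace ℝ (Fin d))) ∩ unitBox d :
      Set (EuclideanSpace ℝ (Fin d))) : ℝ≥0∞) = (C.card : ℝ≥0∞) := by
    rw [Nat.card_eq_card_finite_toFinset hfin]
  rw [hcard, ← h2, h1]

abbrev bilinFormOfRealInner {F : Type*} [NormedAddCommGroup F] [InnerProductSpace ℝ F] :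
    LinearMap.BilinForm ℝ F :=
  innerₗ F

lemma innerNondeg : (bilinFormOfRealInner :
    LinearMap.BilinForm ℝ (EuclideanSpace ℝ (Fin d))).Nondegenerate := by
  refine ⟨fun x hx => ?_, fun x hx => ?_⟩
  all_goals
    have h := hx x
    have h' : (inner ℝ x x : ℝ) = 0 := h
    exact inner_self_eq_zero.mp h'

def dualB (b : Module.Basis (Fin d) ℝ (EuclideanSpace ℝ (Fin d))) :
    Module.Basis (Fin d) ℝ (EuclideanSpace ℝ (Fin d)) :=
  LinearMap.BilinForm.dualBasis _ innerNondeg b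

lemma dualB_inner (b : Module.Basis (Fin d) ℝ (EuclideanSpace ℝ (Fin d))) (i j : Fin d) :
    (inner ℝ (dualB b i) (b j) : ℝ) = if j = i then 1 else 0 := by
  have := LinearMap.BilinForm.apply_dualBasis_left
    (B := (bilinFormOfRealInner : LinearMap.BilinForm ℝ (EuclideanSpace ℝ (Fin d))))
    innerNondeg b i j
  simpa [bilinFormOfRealInner, dualB] using this

lemma det_dualB_mul (b : Module.Basis (Fin d) ℝ (EuclideanSpace ℝ (Fin d))) :
    (stdB d).det (dualB b) * (stdB d).det b = 1 := by
  classical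
  rw [Module.Basis.det_apply, Module.Basis.det_apply, ← Matrix.det_transpose ((stdB d).toMatrix (dualB b)),
    ← Matrix.det_mul]
  have : ((stdB d).toMatrix (dualB b))ᵀ * ((stdB d).toMatrix b) = 1 := by
    ext i j
    simp only [Matrix.mul_apply, Matrix.transpose_apply, Module.Basis.toMatrix_apply,
      Matrix.one_apply]
    have : ∀ k, (stdB d).repr (dualB b i) k = (dualB b i) k := fun k => rfl
    have h2 : ∀ k, (stdB d).repr (b j) k = (b j) k := fun k => rfl
    simp_rw [this, h2]
    have := dualB_inner b i j
    rw [PiLp.inner_apply] at this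
    simp only [RCLike.inner_apply, conj_trivial] at this
    rw [Finset.sum_congr rfl fun x _ => mul_comm ((b j) x) ((dualB b i) x)] at this
    rw [this]
    by_cases h : j = i
    · simp [h]
    · have h' : ¬ i = j := fun hij => h hij.symm
      simp [h, h']
  rw [this, Matrix.det_one]

lemma stdB_apply (i : Fin d) : stdB d i = EuclideanSpace.single i (1:ℝ) := by
  have h : (stdB d) i = (EuclideanSpace.basisFun (Fin d) ℝ) i := by
    rw [stdB, OrthonormalBasis.coe_toBasis]
  rw [h, EuclideanSpace.basisFun_apply]

lemma volume_fund (b : Module.Basis (Fin d) ℝ (EuclideanSpace ℝ (Fin d))) :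
    volume (ZSpan.fundamentalDomain b) = ENNReal.ofReal |(stdB d).det b| := by
  classical
  rw [ZSpan.measure_fundamentalDomain b volume (stdB d), ← unitBox_eq, volume_unitBox, mul_one]

lemma dualB_mem_dualLattice (b : Module.Basis (Fin d) ℝ (EuclideanSpace ℝ (Fin d)))
    (L : Set (EuclideanSpace ℝ (Fin d)))
    (hLb : L = {v | ∃ k : Fin d → ℤ, v = ∑ i, (k i : ℝ) • b i})
    (h : EuclideanSpace ℝ (Fin d)) (hh : h ∈ Submodule.span ℤ (Set.range (dualB b))) :
    h ∈ dualLattice d L := by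
  classical
  intro v hv
  rw [hLb] at hv
  obtain ⟨k, rfl⟩ := hv
  obtain ⟨z, hz⟩ := (mem_zspan_iff _ h).mp hh
  refine ⟨∑ i, z i * k i, ?_⟩
  rw [hz]
  have : (inner ℝ (∑ i, (z i : ℝ) • dualB b i) (∑ j, (k j : ℝ) • b j) : ℝ)
      = ∑ j, (k j : ℝ) * (z j : ℝ) := by
    rw [inner_sum]
    refine Finset.sum_congr rfl fun j _ => ?_
    rw [real_inner_smul_right, sum_inner]
    simp_rw [real_inner_smul_left, dualB_inner b _ j]
    simp [mul_ite]
  rw [this]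
  push_cast
  exact Finset.sum_congr rfl fun j _ => by ring

theorem stmt17 (d : ℕ) (hd : 2 ≤ d) (L : Set (EuclideanSpace ℝ (Fin d)))
    (hL : IsIntegrationLattice d L) (n : ℕ) (hfin : (L ∩ unitBox d).Finite)
    (hn : Nat.card ↥(L ∩ unitBox d) = n) :
    Real.sqrt π / 2 * Real.Gamma ((d : ℝ) / 2 + 1) ^ (-(1 / (d : ℝ))) *
        (n : ℝ) ^ (-(1 / (d : ℝ))) ≤
      spectralTest d L := by
  classical
  obtain ⟨⟨b, hLb⟩, hint⟩ := hL
  have hd0 : 0 < d := by omega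
  have hdR : (0:ℝ) < d := by exact_mod_cast hd0
  have hLset : L = (Submodule.span ℤ (Set.range b) :
      Set (EuclideanSpace ℝ (Fin d))) := by
    rw [hLb]; ext v; rw [SetLike.mem_coe, mem_zspan_iff]; exact Iff.rfl
  have hstdmem : ∀ i, stdB d i ∈ L := by
    intro i
    refine hint _ fun j => ⟨if j = i then 1 else 0, ?_⟩
    rw [stdB_apply, EuclideanSpace.single_apply]
    split_ifs <;> simp
  have hsub : Submodule.span ℤ (Set.range (stdB d)) ≤ Submodule.span ℤ (Set.range b) := by
    rw [Submodule.span_le]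
    rintro _ ⟨i, rfl⟩
    have := hstdmem i; rwa [hLset, SetLike.mem_coe] at this
  have h0mem : (0 : EuclideanSpace ℝ (Fin d)) ∈ L ∩ unitBox d := by
    constructor
    · exact hint 0 fun i => ⟨0, by simp⟩
    · intro i
      exact ⟨le_rfl, zero_lt_one⟩
  have hn0 : n ≠ 0 := by
    rw [← hn]
    haveI := hfin.to_subtype
    haveI : Nonempty ↥(L ∩ unitBox d) := ⟨⟨0, h0mem⟩⟩
    exact Nat.card_pos.ne'
  have hnR : (0:ℝ) < n := by exact_mod_cast Nat.pos_of_ne_zero hn0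
  rw [hLset] at hfin hn
  have hcount := covolume_counting b hsub hfin
  rw [hn] at hcount
  -- determinant values
  have hvb := volume_fund b
  set D : ℝ := |(stdB d).det b| with hDdef
  have hofD : ENNReal.ofReal D = ((n : ℝ≥0∞))⁻¹ := by
    rw [hvb] at hcount
    have hnne : (n : ℝ≥0∞) ≠ 0 := by exact_mod_cast hn0
    have := congrArg (fun x => (n : ℝ≥0∞)⁻¹ * x) hcount
    simpa [← mul_assoc, ENNReal.inv_mul_cancel hnne (ENNReal.natCast_ne_top n)] using this
  have hDval : D = (n : ℝ)⁻¹ := by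
    have h2 : ENNReal.ofReal D = ENNReal.ofReal (n : ℝ)⁻¹ := by
      rw [hofD, ← ENNReal.ofReal_natCast n, ← ENNReal.ofReal_inv_of_pos hnR]
    rwa [ENNReal.ofReal_eq_ofReal_iff (abs_nonneg _) (by positivity)] at h2
  have hdet2 : |(stdB d).det (dualB b)| = (n : ℝ) := by
    have h1 : |(stdB d).det (dualB b)| * D = 1 := by
      rw [← abs_mul, det_dualB_mul, abs_one]
    rw [hDval] at h1
    field_simp at h1
    linarith
  have hvoldual : volume (ZSpan.fundamentalDomain (dualB b)) = (n : ℝ≥0∞) := by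
    rw [volume_fund, hdet2, ENNReal.ofReal_natCast]
  -- constants
  set Γd : ℝ := Real.Gamma ((d:ℝ)/2 + 1) with hΓdef
  have hΓpos : 0 < Γd := Real.Gamma_pos_of_pos (by positivity)
  have hsq : (0:ℝ) < Real.sqrt π := Real.sqrt_pos.mpr Real.pi_pos
  set c : ℝ := Real.sqrt π / 2 * Γd ^ (-(1/(d:ℝ))) * (n:ℝ) ^ (-(1/(d:ℝ))) with hcdef
  have hcpos : 0 < c := by
    have := Real.rpow_pos_of_pos hΓpos (-(1/(d:ℝ)))
    have := Real.rpow_pos_of_pos hnR (-(1/(d:ℝ)))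
    positivity
  set r₀ : ℝ := c⁻¹ with hr0
  have hr0pos : 0 < r₀ := inv_pos.mpr hcpos
  have hr0_eq : r₀ ^ d * (Real.sqrt π ^ d / Γd) = 2 ^ d * n := by
    have h1 : r₀ = 2 / Real.sqrt π * Γd ^ ((1:ℝ)/d) * (n:ℝ) ^ ((1:ℝ)/d) := by
      rw [hr0, hcdef, Real.rpow_neg hΓpos.le, Real.rpow_neg hnR.le]
      have hΓr := Real.rpow_pos_of_pos hΓpos ((1:ℝ)/d)
      have hnr := Real.rpow_pos_of_pos hnR ((1:ℝ)/d)
      field_simp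
    have hg : (Γd ^ ((1:ℝ)/d)) ^ d = Γd := by
      rw [← Real.rpow_natCast (Γd ^ ((1:ℝ)/d)) d, ← Real.rpow_mul hΓpos.le, one_div,
        inv_mul_cancel₀ (by positivity : (d:ℝ) ≠ 0), Real.rpow_one]
    have hgn : ((n:ℝ) ^ ((1:ℝ)/d)) ^ d = n := by
      rw [← Real.rpow_natCast ((n:ℝ) ^ ((1:ℝ)/d)) d, ← Real.rpow_mul hnR.le, one_div,
        inv_mul_cancel₀ (by positivity : (d:ℝ) ≠ 0), Real.rpow_one]
    rw [h1, mul_pow, mul_pow, hg, hgn, div_pow]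
    field_simp
  -- Minkowski
  haveI : Countable ↥(Submodule.span ℤ (Set.range (dualB b))).toAddSubgroup :=
    countable_span (dualB b)
  set S := {s : ℝ | ∃ h ∈ dualLattice d L, h ≠ 0 ∧ s = ‖h‖} with hSdef
  have hmink : ∀ r : ℝ, r₀ < r → ∃ s ∈ S, s < r := by
    intro r hr
    haveI : Nonempty (Fin d) := ⟨⟨0, hd0⟩⟩
    have hrpos : 0 < r := hr0pos.trans hr
    have hballvol : volume (Metric.ball (0 : EuclideanSpace ℝ (Fin d)) r)
        = ENNReal.ofReal (r ^ d * (Real.sqrt π ^ d / Γd)) := by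
      rw [EuclideanSpace.volume_ball, Fintype.card_fin,
        ← ENNReal.ofReal_pow hrpos.le, ← ENNReal.ofReal_mul (by positivity)]
    have hlt : volume (ZSpan.fundamentalDomain (dualB b)) *
        2 ^ (Module.finrank ℝ (EuclideanSpace ℝ (Fin d))) <
        volume (Metric.ball (0 : EuclideanSpace ℝ (Fin d)) r) := by
      rw [hvoldual, hballvol, finrank_euclideanSpace_fin]
      have hlhs : ((n:ℝ≥0∞)) * 2 ^ d = ENNReal.ofReal (2 ^ d * n) := by
        rw [ENNReal.ofReal_mul (by positivity), ENNReal.ofReal_pow (by norm_num),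
          ENNReal.ofReal_natCast, ENNReal.ofReal_ofNat, mul_comm]
      rw [hlhs, ENNReal.ofReal_lt_ofReal_iff (by positivity), ← hr0_eq]
      have hfrac : 0 < Real.sqrt π ^ d / Γd := by positivity
      exact mul_lt_mul_of_pos_right
        (pow_lt_pow_left₀ hr hr0pos.le (by omega : d ≠ 0)) hfrac
    obtain ⟨x, hx0, hxball⟩ := exists_ne_zero_mem_lattice_of_measure_mul_two_pow_lt_measure
      (ZSpan.isAddFundamentalDomain' (dualB b) volume)
      (fun y hy => by simpa [Metric.mem_ball, dist_zero_right] using hy)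
      (convex_ball (0 : EuclideanSpace ℝ (Fin d)) r) hlt
    refine ⟨‖(x : EuclideanSpace ℝ (Fin d))‖, ⟨x, ?_, ?_, rfl⟩, ?_⟩
    · exact dualB_mem_dualLattice b L hLb _ x.2
    · exact fun h => hx0 (Subtype.ext h)
    · simpa [Metric.mem_ball, dist_zero_right] using hxball
  have hS_lb : ∀ s ∈ S, (1:ℝ) ≤ s := by
    rintro s ⟨h, hh, hne, rfl⟩
    obtain ⟨i, hi⟩ : ∃ i, h i ≠ 0 := by
      by_contra hc; push_neg at hc
      exact hne (PiLp.ext fun i => by simpa using hc i)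
    obtain ⟨z, hz⟩ := hh (stdB d i) (hstdmem i)
    have hinner : (inner ℝ h (stdB d i) : ℝ) = h i := by
      rw [stdB_apply, EuclideanSpace.inner_single_right]
      simp
    have hz0 : z ≠ 0 := by
      rintro rfl; rw [hinner] at hz
      exact hi (by simpa using hz)
    have h1z : (1:ℝ) ≤ |(z:ℝ)| := by exact_mod_cast Int.one_le_abs hz0
    calc (1:ℝ) ≤ |(z:ℝ)| := h1z
      _ = |(inner ℝ h (stdB d i) : ℝ)| := by rw [hz]
      _ ≤ ‖h‖ * ‖stdB d i‖ := abs_real_inner_le_norm _ _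
      _ = ‖h‖ := by rw [stdB_apply, EuclideanSpace.norm_single]; simp
  have hSbdd : BddBelow S := ⟨1, hS_lb⟩
  have hSne : S.Nonempty := by
    obtain ⟨s, hs, _⟩ := hmink (r₀ + 1) (by linarith)
    exact ⟨s, hs⟩
  have hinf_le : sInf S ≤ r₀ := by
    by_contra hcon; push_neg at hcon
    obtain ⟨s, hs, hlt⟩ := hmink (sInf S) hcon
    exact absurd (csInf_le hSbdd hs) (not_le.mpr hlt)
  have hinf_pos : 0 < sInf S := lt_of_lt_of_le one_pos (le_csInf hSne hS_lb)
  rw [spectralTest]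
  calc c = r₀⁻¹ := (inv_inv c).symm
    _ ≤ (sInf S)⁻¹ := inv_anti₀ hinf_pos hinf_le
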